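/- arXiv:2511.21293 — 8 statements merged into one kernel-verified Lean document; each statement's English description precedes it below -/
import Mathlib

section
/- Let G be a group, A an arbitrary group, H ≤ K ≤ G subgroups, and ψ : G → A a group homomorphism. If ψ restricted to H is injective and ψ(H) is a virtual retract of A, then H is a virtual retract of G. -/
/-- `H` is a virtual retract of `G`: there is a finite-index subgroup `K ≤ G` containing
`H` and a homomorphism `ρ : K → H` restricting to the identity on `H`. -/
def IsVirtualRetract {G : Type*} [Group G] (H : Subgroup G) : Prop :=
  ∃ (K : Subgroup G) (hHK : H ≤ K), K.FiniteIndex ∧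
    ∃ ρ : ↥K →* ↥H, ∀ (h : G) (hh : h ∈ H), (ρ ⟨h, hHK hh⟩ : G) = h

/-- If `ψ : G → A` is injective on `H` and `ψ(H)` is a virtual retract of `A`,
then `H` is a virtual retract of `G`. -/
theorem isVirtualRetract_of_map {G A : Type*} [Group G] [Group A]
    (H K : Subgroup G) (hHK : H ≤ K) (ψ : G →* A)
    (hinj : Set.InjOn ψ (H : Set G)) (hvr : IsVirtualRetract (H.map ψ)) :
    IsVirtualRetract H := by
  obtain ⟨L, hL, hLfi, ρ, hρ⟩ := hvr
  -- the equivalence H ≃* H.map ψ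
  have hesurj : Function.Surjective (ψ.subgroupMap H) := ψ.subgroupMap_surjective H
  have heinj : Function.Injective (ψ.subgroupMap H) := by
    intro x y hxy
    ext
    exact hinj x.2 y.2 (congrArg Subtype.val hxy)
  let e : ↥H ≃* ↥(H.map ψ) := MulEquiv.ofBijective _ ⟨heinj, hesurj⟩
  refine ⟨L.comap ψ, fun h hh => by simpa using hL ⟨h, hh, rfl⟩, ⟨by
    rw [Subgroup.index_comap]
    exact fun h0 => hLfi.index_ne_zero (Subgroup.index_eq_zero_of_relIndex_eq_zero h0)⟩, ?_⟩
  let f : ↥(L.comap ψ) →* ↥L := (ψ.domRestrict (L.comap ψ)).codRestrict L (fun x => x.2)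
  refine ⟨e.symm.toMonoidHom.comp (ρ.comp f), fun h hh => ?_⟩
  have h1 : ρ (f ⟨h, by simpa using hL ⟨h, hh, rfl⟩⟩) = e ⟨h, hh⟩ := by
    have hmem : ψ h ∈ H.map ψ := ⟨h, hh, rfl⟩
    have : (ρ ⟨ψ h, hL hmem⟩ : A) = ψ h := hρ (ψ h) hmem
    ext
    simp only [f, MonoidHom.codRestrict_apply, MonoidHom.restrict_apply]
    exact this.trans rfl
  simp only [MonoidHom.comp_apply, MulEquiv.coe_toMonoidHom, h1, MulEquiv.symm_apply_apply]
end

section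
/- Let H, N₁, N₂ be a group with normal subgroups N₁, N₂ ◁ H satisfying N₁ ∩ N₂ = {1}, and let Q, R ≤ H both be complements to L := N₁N₂ in H (i.e. H = LQ, L ∩ Q = {1}, and similarly for R). Let αᵢ : H → H/Nᵢ be the quotient maps. If αᵢ(Q) is conjugate to αᵢ(R) in H/Nᵢ for each i = 1, 2, then there exists h ∈ L with Q = hRh⁻¹. -/
open Pointwise

private lemma map_conj_comm' {H K : Type*} [Group H] [Group K] (f : H →* K)
    (R : Subgroup H) (g : H) :
    (R.map (MulAut.conj g).toMonoidHom).map f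
      = (R.map f).map (MulAut.conj (f g)).toMonoidHom := by
  rw [Subgroup.map_map, Subgroup.map_map]
  congr 1
  ext x
  simp [mul_assoc]

private lemma map_conj_mul' {H : Type*} [Group H] (R : Subgroup H) (a b : H) :
    R.map (MulAut.conj (a * b)).toMonoidHom
      = (R.map (MulAut.conj b).toMonoidHom).map (MulAut.conj a).toMonoidHom := by
  rw [Subgroup.map_map]
  congr 1
  ext x
  simp [mul_assoc]

private lemma conj_inv_conj' {H : Type*} [Group H] (S : Subgroup H) (c : H) :
    (S.map (MulAut.conj c).toMonoidHom).map (MulAut.conj c⁻¹).toMonoidHom = S := by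
  rw [Subgroup.map_map]
  have h : (MulAut.conj c⁻¹).toMonoidHom.comp (MulAut.conj c).toMonoidHom
      = MonoidHom.id H := by
    ext x; simp [mul_assoc]
  rw [h, Subgroup.map_id]

private lemma conj_mem_self' {H : Type*} [Group H] (Q : Subgroup H) {q : H} (hq : q ∈ Q) :
    Q.map (MulAut.conj q).toMonoidHom = Q := by
  ext x
  constructor
  · rintro ⟨y, hy, rfl⟩
    simpa using mul_mem (mul_mem hq hy) (inv_mem hq)
  · intro hx
    exact ⟨q⁻¹ * x * q, mul_mem (mul_mem (inv_mem hq) hx) hq, by simp [mul_assoc]⟩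

private lemma map_conj_normal' {H : Type*} [Group H] (L : Subgroup H) [hL : L.Normal]
    (c : H) : L.map (MulAut.conj c).toMonoidHom = L := by
  ext x
  constructor
  · rintro ⟨y, hy, rfl⟩
    simpa using hL.conj_mem y hy c
  · intro hx
    exact ⟨c⁻¹ * x * c, by simpa using hL.conj_mem x hx c⁻¹, by simp [mul_assoc]⟩

private lemma conj_ker_map' {H : Type*} [Group H] {M : Subgroup H} [M.Normal]
    (R : Subgroup H) {c : H} (hc : c ∈ M) :
    (R.map (MulAut.conj c).toMonoidHom).map (QuotientGroup.mk' M)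
      = R.map (QuotientGroup.mk' M) := by
  rw [map_conj_comm']
  have h1 : QuotientGroup.mk' M c = 1 := (QuotientGroup.eq_one_iff c).mpr hc
  rw [h1]
  have h2 : (MulAut.conj (1 : H ⧸ M)).toMonoidHom = MonoidHom.id _ := by
    ext x; simp
  rw [h2, Subgroup.map_id]

/-- Key uniqueness lemma: a subgroup with trivial-ish relation. -/
private lemma le_of_maps' {H : Type*} [Group H] {N₁ N₂ L Q T : Subgroup H}
    [N₁.Normal] [N₂.Normal]
    (hdisj : N₁ ⊓ N₂ = ⊥)
    (hL : (L : Set H) = (N₁ : Set H) * (N₂ : Set H))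
    (hQmeet : L ⊓ Q = ⊥)
    (h1 : T.map (QuotientGroup.mk' N₁) = Q.map (QuotientGroup.mk' N₁))
    (h2 : T.map (QuotientGroup.mk' N₂) = Q.map (QuotientGroup.mk' N₂)) :
    T ≤ Q := by
  intro t ht
  have m1 : QuotientGroup.mk' N₁ t ∈ Q.map (QuotientGroup.mk' N₁) :=
    h1 ▸ Subgroup.mem_map.mpr ⟨t, ht, rfl⟩
  have m2 : QuotientGroup.mk' N₂ t ∈ Q.map (QuotientGroup.mk' N₂) :=
    h2 ▸ Subgroup.mem_map.mpr ⟨t, ht, rfl⟩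
  obtain ⟨q₁, hq₁, e₁⟩ := Subgroup.mem_map.mp m1
  obtain ⟨q₂, hq₂, e₂⟩ := Subgroup.mem_map.mp m2
  rw [QuotientGroup.mk'_eq_mk'] at e₁ e₂
  obtain ⟨n₁, hn₁, rfl⟩ := e₁
  obtain ⟨n₂, hn₂, he₂⟩ := e₂
  -- he₂ : q₂ * n₂ = q₁ * n₁
  have key : q₁⁻¹ * q₂ = n₁ * n₂⁻¹ := by
    calc q₁⁻¹ * q₂ = q₁⁻¹ * (q₂ * n₂) * n₂⁻¹ := by group
    _ = q₁⁻¹ * (q₁ * n₁) * n₂⁻¹ := by rw [he₂]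
    _ = n₁ * n₂⁻¹ := by group
  have hq12 : q₁⁻¹ * q₂ ∈ L := by
    rw [← SetLike.mem_coe, hL]
    exact ⟨n₁, hn₁, n₂⁻¹, SetLike.mem_coe.mpr (N₂.inv_mem hn₂), key.symm⟩
  have hq12' : q₁⁻¹ * q₂ ∈ L ⊓ Q := ⟨hq12, Q.mul_mem (Q.inv_mem hq₁) hq₂⟩
  rw [hQmeet, Subgroup.mem_bot, inv_mul_eq_one] at hq12'
  subst hq12'
  have hn12 : n₁ ∈ N₁ ⊓ N₂ := ⟨hn₁, (mul_left_cancel he₂.symm : n₁ = n₂) ▸ hn₂⟩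
  rw [hdisj, Subgroup.mem_bot] at hn12
  rw [hn12, mul_one]
  exact hq₁

private lemma exists_conj_L' {H : Type*} [Group H] {L Q R M : Subgroup H} [M.Normal]
    [L.Normal] (hQprod : (L : Set H) * (Q : Set H) = Set.univ)
    (hconj : ∃ x : H ⧸ M,
      (R.map (QuotientGroup.mk' M)).map (MulAut.conj x).toMonoidHom
        = Q.map (QuotientGroup.mk' M)) :
    ∃ l ∈ L, (R.map (MulAut.conj l).toMonoidHom).map (QuotientGroup.mk' M)
      = Q.map (QuotientGroup.mk' M) := by
  obtain ⟨x, hx⟩ := hconj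
  obtain ⟨g, rfl⟩ := QuotientGroup.mk'_surjective M x
  -- decompose g = q * l with q ∈ Q, l ∈ L
  have hg : g ∈ (L : Set H) * (Q : Set H) := by rw [hQprod]; trivial
  obtain ⟨l₀, hl₀, q, hq, hgeq⟩ := hg
  simp only at hgeq
  subst hgeq
  set l : H := q⁻¹ * l₀ * q with hl_def
  have hlL : l ∈ L := by simpa using Subgroup.Normal.conj_mem ‹L.Normal› l₀ hl₀ q⁻¹
  have hgql : l₀ * q = q * l := by rw [hl_def]; group
  refine ⟨l, hlL, ?_⟩
  rw [hgql] at hx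
  rw [map_mul] at hx
  rw [map_conj_mul'] at hx
  -- hx : ((R.map α).map (conj (α l))).map (conj (α q)) = Q.map α
  have hx2 := congrArg (fun S => S.map (MulAut.conj ((QuotientGroup.mk' M) q)⁻¹).toMonoidHom) hx
  rw [conj_inv_conj'] at hx2
  -- RHS : (Q.map α).map (conj (α q)⁻¹) = Q.map α
  have hrhs : (Q.map (QuotientGroup.mk' M)).map
      (MulAut.conj ((QuotientGroup.mk' M) q)⁻¹).toMonoidHom = Q.map (QuotientGroup.mk' M) := by
    rw [← map_inv, ← map_conj_comm', conj_mem_self' Q (inv_mem hq)]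
  rw [hrhs] at hx2
  rw [← map_conj_comm'] at hx2
  exact hx2

/-- Let `N₁, N₂ ◁ H` with `N₁ ∩ N₂ = {1}` and let `L` be the subgroup with underlying
set `N₁N₂`. If `Q, R` are complements to `L` in `H` (i.e. `H = LQ`, `L ∩ Q = {1}`, and
similarly for `R`) whose images in `H/N₁` and in `H/N₂` are conjugate, then `Q = hRh⁻¹`
for some `h ∈ L`. -/
theorem complements_conj_of_conj_in_quotients (H : Type*) [Group H]
    (N₁ N₂ : Subgroup H) [N₁.Normal] [N₂.Normal] (hdisj : N₁ ⊓ N₂ = ⊥)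
    (L : Subgroup H) (hL : (L : Set H) = (N₁ : Set H) * (N₂ : Set H))
    (Q R : Subgroup H)
    (hQmeet : L ⊓ Q = ⊥) (hQprod : (L : Set H) * (Q : Set H) = Set.univ)
    (hRmeet : L ⊓ R = ⊥) (hRprod : (L : Set H) * (R : Set H) = Set.univ)
    (hconj1 : ∃ x : H ⧸ N₁,
      (R.map (QuotientGroup.mk' N₁)).map (MulAut.conj x).toMonoidHom
        = Q.map (QuotientGroup.mk' N₁))
    (hconj2 : ∃ x : H ⧸ N₂,
      (R.map (QuotientGroup.mk' N₂)).map (MulAut.conj x).toMonoidHom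
        = Q.map (QuotientGroup.mk' N₂)) :
    ∃ h ∈ L, R.map (MulAut.conj h).toMonoidHom = Q := by
  have hLsup : L = N₁ ⊔ N₂ := by
    apply SetLike.ext'
    rw [hL, ← Subgroup.normal_mul]
  haveI : L.Normal := hLsup ▸ Subgroup.sup_normal N₁ N₂
  -- step 1: get l₁ ∈ L conjugating mod N₁, l₂ ∈ L conjugating mod N₂
  obtain ⟨l₁, hl₁L, hl₁⟩ := exists_conj_L' (M := N₁) hQprod hconj1
  obtain ⟨l₂, hl₂L, hl₂⟩ := exists_conj_L' (M := N₂) hQprod hconj2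
  -- decompose l₁ = a₁ * b₁ with a₁ ∈ N₁, b₁ ∈ N₂; kill a₁ mod N₁
  have hl₁' : l₁ ∈ (N₁ : Set H) * (N₂ : Set H) := hL ▸ hl₁L
  obtain ⟨a₁, ha₁, b₁, hb₁, heq₁⟩ := hl₁'
  simp only at heq₁
  subst heq₁
  have fact1 : (R.map (MulAut.conj b₁).toMonoidHom).map (QuotientGroup.mk' N₁)
      = Q.map (QuotientGroup.mk' N₁) := by
    rw [map_conj_mul'] at hl₁
    rwa [conj_ker_map' _ ha₁] at hl₁
  -- decompose l₂ = a₂ * b₂ with a₂ ∈ N₁, b₂ ∈ N₂; kill b₂ mod N₂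
  have hl₂' : l₂ ∈ (N₁ : Set H) * (N₂ : Set H) := hL ▸ hl₂L
  obtain ⟨a₂, ha₂, b₂, hb₂, heq₂⟩ := hl₂'
  simp only at heq₂
  subst heq₂
  have fact2 : (R.map (MulAut.conj a₂).toMonoidHom).map (QuotientGroup.mk' N₂)
      = Q.map (QuotientGroup.mk' N₂) := by
    rw [map_conj_mul', map_conj_comm', conj_ker_map' _ hb₂, ← map_conj_comm'] at hl₂
    exact hl₂
  -- set h := a₂ * b₁
  refine ⟨a₂ * b₁, ?_, ?_⟩
  · rw [← SetLike.mem_coe, hL]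
    exact ⟨a₂, ha₂, b₁, hb₁, rfl⟩
  · set T := R.map (MulAut.conj (a₂ * b₁)).toMonoidHom with hT
    have hT1 : T.map (QuotientGroup.mk' N₁) = Q.map (QuotientGroup.mk' N₁) := by
      rw [hT, map_conj_mul', conj_ker_map' _ ha₂]
      exact fact1
    have hT2 : T.map (QuotientGroup.mk' N₂) = Q.map (QuotientGroup.mk' N₂) := by
      rw [hT, map_conj_mul', map_conj_comm', conj_ker_map' _ hb₁, ← map_conj_comm']
      exact fact2
    have hTmeet : L ⊓ T = ⊥ := by
      have : L ⊓ T = (L ⊓ R).map (MulAut.conj (a₂ * b₁)).toMonoidHom := by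
        rw [Subgroup.map_inf L R (MulAut.conj (a₂ * b₁)).toMonoidHom
          (MulAut.conj (a₂ * b₁)).injective, map_conj_normal']
      rw [this, hRmeet]
      exact Subgroup.map_bot _
    apply le_antisymm
    · exact le_of_maps' hdisj hL hQmeet hT1 hT2
    · exact le_of_maps' (N₁ := N₁) (N₂ := N₂) hdisj hL hTmeet hT1.symm hT2.symm
end

section
/- Let A be a torsion-free group and S a group acting on a finite set Ω. In the permutational wreath product G = A ≀_Ω S = A^Ω ⋊ S, every finite subgroup Q ≤ G is conjugate by an element h of the base group A^Ω into the top group S, i.e. Q ⊆ h S h⁻¹. -/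
/-- A monoid is torsion-free if no element other than `1` has finite order
(the definition Mathlib had as `Monoid.IsTorsionFree`; it has since been removed). -/
def Monoid.IsTorsionFree (G : Type*) [Monoid G] : Prop :=
  ∀ g : G, g ≠ 1 → ¬IsOfFinOrder g

/-- The coordinate-permuting automorphism of `Ω → A` induced by `s : S`. -/
def wreathMulAut (A : Type*) [Group A] {S Ω : Type*} [Group S] [MulAction S Ω]
    (s : S) : MulAut (Ω → A) where
  toFun f := fun x => f (s⁻¹ • x)
  invFun f := fun x => f (s • x)
  left_inv f := by funext x; simp
  right_inv f := by funext x; simp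
  map_mul' f g := rfl

/-- The action homomorphism `S →* MulAut (Ω → A)` for the permutational wreath
product. -/
def wreathHom (A : Type*) [Group A] (S : Type*) [Group S] (Ω : Type*)
    [MulAction S Ω] : S →* MulAut (Ω → A) where
  toFun := wreathMulAut A
  map_one' := by
    ext f x
    show f ((1 : S)⁻¹ • x) = f x
    simp
  map_mul' s t := by
    ext f x
    show f ((s * t)⁻¹ • x) = f (t⁻¹ • s⁻¹ • x)
    rw [mul_inv_rev, mul_smul]

/-- The permutational wreath product `A ≀_Ω S = A^Ω ⋊ S`. -/
abbrev WreathProduct (A : Type*) [Group A] (S : Type*) [Group S] (Ω : Type*)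
    [MulAction S Ω] :=
  (Ω → A) ⋊[wreathHom A S Ω] S

section aux
variable {A : Type*} [Group A] {S : Type*} [Group S] {Ω : Type*} [MulAction S Ω]

lemma wreath_mul_left (a b : WreathProduct A S Ω) (x : Ω) :
    (a * b).left x = a.left x * b.left (a.right⁻¹ • x) := by
  rw [SemidirectProduct.mul_left]; rfl

lemma wreath_inv_left (a : WreathProduct A S Ω) (x : Ω) :
    (a⁻¹).left x = (a.left (a.right • x))⁻¹ := by
  rw [SemidirectProduct.inv_left]
  show (a.left)⁻¹ ((a.right⁻¹)⁻¹ • x) = _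
  simp

lemma wreath_pow_left (a : WreathProduct A S Ω) {y : Ω} (hy : a.right • y = y) (n : ℕ) :
    (a ^ n).left y = (a.left y) ^ n := by
  have hy' : a.right⁻¹ • y = y := by rw [inv_smul_eq_iff, hy]
  induction n with
  | zero => simp
  | succ n ih =>
      rw [pow_succ', wreath_mul_left, hy', ih, pow_succ']

end aux

/-- In a permutational wreath product `A ≀_Ω S` with `A` torsion-free and `Ω` finite,
every finite subgroup is conjugate into the top group `S` by an element of the base
group `A^Ω`. -/
theorem finite_subgroup_conj_into_top (A : Type*) [Group A]
    (htf : Monoid.IsTorsionFree A)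
    (S : Type*) [Group S] (Ω : Type*) [MulAction S Ω] [Finite Ω]
    (Q : Subgroup (WreathProduct A S Ω)) (hQ : Finite Q) :
    ∃ f : Ω → A, ∀ q ∈ Q, ∃ s : S,
      q = SemidirectProduct.inl f * SemidirectProduct.inr s
            * (SemidirectProduct.inl f)⁻¹ := by
  classical
  -- stabilizer triviality
  have key : ∀ (y : Ω) (q : WreathProduct A S Ω), q ∈ Q → q.right • y = y →
      q.left y = 1 := by
    intro y q hq hy
    obtain ⟨n, hn, hqn⟩ := isOfFinOrder_iff_pow_eq_one.mp
      (isOfFinOrder_of_finite (⟨q, hq⟩ : Q))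
    have hqn' : q ^ n = 1 := by
      have := congrArg (Subgroup.subtype Q) hqn
      simpa using this
    have hpow : (q.left y) ^ n = 1 := by
      rw [← wreath_pow_left q hy, hqn']; rfl
    by_contra h
    exact htf _ h (isOfFinOrder_iff_pow_eq_one.mpr ⟨n, hn, hpow⟩)
  letI r : Setoid Ω :=
    ⟨fun x y => ∃ q ∈ Q, SemidirectProduct.right q • y = x,
     ⟨fun x => ⟨1, Q.one_mem, by simp⟩,
      fun {x y} h => by
        obtain ⟨q, hq, h⟩ := h
        exact ⟨q⁻¹, inv_mem hq, by
          rw [SemidirectProduct.inv_right, inv_smul_eq_iff, h]⟩,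
      fun {x y z} h1 h2 => by
        obtain ⟨q, hq, h1⟩ := h1
        obtain ⟨p, hp, h2⟩ := h2
        exact ⟨q * p, mul_mem hq hp, by
          rw [SemidirectProduct.mul_right, mul_smul, h2, h1]⟩⟩⟩
  set rep : Ω → Ω := fun x => (⟦x⟧ : Quotient r).out with hrepdef
  have hrep : ∀ x, ∃ q ∈ Q, SemidirectProduct.right q • x = rep x := fun x =>
    Quotient.exact (Quotient.out_eq (⟦x⟧ : Quotient r))
  have hrepconst : ∀ (x : Ω) (q : WreathProduct A S Ω), q ∈ Q →
      rep (q.right⁻¹ • x) = rep x := by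
    intro x q hq
    have : (⟦q.right⁻¹ • x⟧ : Quotient r) = ⟦x⟧ := by
      apply Quotient.sound
      exact ⟨q⁻¹, inv_mem hq, by rw [SemidirectProduct.inv_right]⟩
    simp only [hrepdef, this]
  have hu : ∀ x, ∃ q ∈ Q, SemidirectProduct.right q • rep x = x := by
    intro x
    obtain ⟨q, hq, h⟩ := hrep x
    exact ⟨q⁻¹, inv_mem hq, by rw [SemidirectProduct.inv_right, inv_smul_eq_iff, h]⟩
  choose u hu1 hu2 using hu
  set g : Ω → A := fun x => (u x).left x with hgdef
  have main : ∀ (q : WreathProduct A S Ω), q ∈ Q → ∀ x : Ω,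
      q.left x = g x * (g (q.right⁻¹ • x))⁻¹ := by
    intro q hq x
    have hrx' : rep (q.right⁻¹ • x) = rep x := hrepconst x q hq
    have hw : (u (q.right⁻¹ • x)).right • rep x = q.right⁻¹ • x := by
      rw [← hrx']; exact hu2 _
    have hz : ((u x)⁻¹ * (q * u (q.right⁻¹ • x))).right • rep x = rep x := by
      rw [SemidirectProduct.mul_right, SemidirectProduct.mul_right,
        SemidirectProduct.inv_right, mul_smul, mul_smul, hw, smul_inv_smul,
        inv_smul_eq_iff, hu2 x]
    have hz1 := key (rep x) _
      (mul_mem (inv_mem (hu1 x)) (mul_mem hq (hu1 (q.right⁻¹ • x)))) hz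
    have e : ((u x)⁻¹ * (q * u (q.right⁻¹ • x))).left (rep x)
        = ((u x).left x)⁻¹ * (q.left x * (u (q.right⁻¹ • x)).left (q.right⁻¹ • x)) := by
      rw [wreath_mul_left, wreath_inv_left, SemidirectProduct.inv_right, inv_inv,
        hu2 x, wreath_mul_left]
    rw [e] at hz1
    have h2 : q.left x * g (q.right⁻¹ • x) = g x := (inv_mul_eq_one.mp hz1).symm
    exact eq_mul_inv_of_mul_eq h2
  refine ⟨g, fun q hq => ⟨q.right, ?_⟩⟩
  have hR : (SemidirectProduct.inl g * SemidirectProduct.inr q.right *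
      (SemidirectProduct.inl g)⁻¹ : WreathProduct A S Ω).right = q.right := by
    simp
  have hL : (SemidirectProduct.inl g * SemidirectProduct.inr q.right *
      (SemidirectProduct.inl g)⁻¹ : WreathProduct A S Ω).left = q.left := by
    funext x
    rw [wreath_mul_left, wreath_mul_left, wreath_inv_left, main q hq x]
    simp
  exact (SemidirectProduct.ext hL.symm hR.symm)
end

section
/- Let P be a group with a finite-index normal subgroup B isomorphic to ℤ^j (j ≥ 1), and let Q ≤ P be a finite subgroup. Then there exist k ∈ ℕ and an injective homomorphism η : P → ℤ ≀_{Ω_k} S_k (with Ω_k = {1,…,k} and S_k the symmetric group) such that η(B) is contained in the base group ℤ^{Ω_k}, η(Q) is contained in S_k, and η(Q) acts freely on Ω_k. -/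
section Aux

variable {P : Type*} [Group P] {B : Subgroup P} [B.Normal]

theorem cocycle_mem (σ : (P ⧸ B) → P) (hσ : ∀ x, ((σ x : P) : P ⧸ B) = x)
    (p : P) (x : P ⧸ B) : (σ x)⁻¹ * p * σ (((p : P ⧸ B))⁻¹ * x) ∈ B := by
  rw [← QuotientGroup.eq_one_iff]
  rw [QuotientGroup.mk_mul, QuotientGroup.mk_mul, QuotientGroup.mk_inv, hσ, hσ]
  group

noncomputable def cocycle (σ : (P ⧸ B) → P) (hσ : ∀ x, ((σ x : P) : P ⧸ B) = x)
    (p : P) (x : P ⧸ B) : B :=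
  ⟨(σ x)⁻¹ * p * σ (((p : P ⧸ B))⁻¹ * x), cocycle_mem σ hσ p x⟩

theorem cocycle_mul (σ : (P ⧸ B) → P) (hσ : ∀ x, ((σ x : P) : P ⧸ B) = x)
    (p p' : P) (x : P ⧸ B) :
    cocycle σ hσ (p * p') x =
      cocycle σ hσ p x * cocycle σ hσ p' (((p : P ⧸ B))⁻¹ * x) := by
  apply Subtype.ext
  have harg : (((p * p' : P) : P ⧸ B))⁻¹ * x
      = ((p' : P ⧸ B))⁻¹ * (((p : P ⧸ B))⁻¹ * x) := by
    rw [QuotientGroup.mk_mul, mul_inv_rev, mul_assoc]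
  simp only [cocycle, Subgroup.coe_mul, harg]
  group

end Aux

/-- Embedding a finitely generated virtually-`ℤ^j` group into a complete monomial
group `ℤ ≀_{Ω_k} S_k`, sending `B` into the base, a chosen finite subgroup `Q` into
`S_k`, and so that the image of `Q` acts freely on `Ω_k`. -/
theorem exists_embedding_into_monomial_group (P : Type*) [Group P]
    (B : Subgroup P) [B.Normal] (hBfi : B.FiniteIndex)
    (j : ℕ) (hj : 1 ≤ j) (e : ↥B ≃* (Fin j → Multiplicative ℤ))
    (Q : Subgroup P) (hQ : Finite Q) :
    ∃ (k : ℕ) (η : P →* WreathProduct (Multiplicative ℤ) (Equiv.Perm (Fin k)) (Fin k)),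
      Function.Injective η ∧
      (∀ b ∈ B, ∃ f : Fin k → Multiplicative ℤ, η b = SemidirectProduct.inl f) ∧
      (∀ q ∈ Q, ∃ σ : Equiv.Perm (Fin k),
        η q = SemidirectProduct.inr σ ∧ (σ ≠ 1 → ∀ x, σ x ≠ x)) := by
  classical
  haveI := hBfi
  haveI : Finite (P ⧸ B) := B.finite_quotient_of_finiteIndex
  haveI : Fintype (P ⧸ B) := Fintype.ofFinite _
  -- Q ∩ B is trivial
  have hQB : ∀ g : P, g ∈ Q → g ∈ B → g = 1 := by
    intro g hgQ hgB
    have hfin : IsOfFinOrder (⟨g, hgQ⟩ : Q) := isOfFinOrder_of_finite _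
    obtain ⟨n, hn, hgn⟩ := isOfFinOrder_iff_pow_eq_one.mp hfin
    have hgn' : g ^ n = 1 := by
      have := congrArg (Subtype.val) hgn
      simpa using this
    have hb : (⟨g, hgB⟩ : B) ^ n = 1 := by
      apply Subtype.ext; simpa using hgn'
    have he : e ⟨g, hgB⟩ ^ n = 1 := by rw [← map_pow, hb, map_one]
    have he1 : e ⟨g, hgB⟩ = 1 := by
      funext i
      have hi : (e ⟨g, hgB⟩ i) ^ n = 1 := by
        have := congrFun he i; simpa using this
      have h2 : n • (Multiplicative.toAdd (e ⟨g, hgB⟩ i)) = 0 := by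
        rw [← toAdd_pow, hi]; rfl
      have hz : Multiplicative.toAdd (e ⟨g, hgB⟩ i) = 0 := by
        rcases smul_eq_zero.mp h2 with h | h
        · omega
        · exact h
      show e ⟨g, hgB⟩ i = 1
      have := congrArg Multiplicative.ofAdd hz
      simpa using this
    have : (⟨g, hgB⟩ : B) = 1 := by
      apply e.injective; rw [he1, map_one]
    exact congrArg Subtype.val this
  -- freeness of Q acting on P ⧸ B
  have hfix : ∀ g ∈ Q, ∀ x : P ⧸ B, ((g : P ⧸ B)) * x = x → g = 1 := by
    intro g hg x hx
    induction x using QuotientGroup.induction_on with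
    | H h =>
      rw [← QuotientGroup.mk_mul] at hx
      have hmem : (g * h)⁻¹ * h ∈ B := QuotientGroup.eq.mp hx
      have hmem' : h * ((g * h)⁻¹ * h) * h⁻¹ ∈ B :=
        Subgroup.Normal.conj_mem ‹B.Normal› _ hmem h
      have hinv : g⁻¹ ∈ B := by
        convert hmem' using 1
        group
      exact hQB g hg (by simpa using B.inv_mem hinv)
  -- equivariant transversal
  have hσex : ∃ σ : (P ⧸ B) → P, (∀ x, ((σ x : P) : P ⧸ B) = x) ∧
      (∀ q ∈ Q, ∀ x, σ (((q : P ⧸ B)) * x) = q * σ x) := by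
    have hsetoid : Equivalence (fun x y : P ⧸ B => ∃ q ∈ Q, ((q : P) : P ⧸ B) * y = x) := by
      constructor
      · intro x; exact ⟨1, Q.one_mem, by simp⟩
      · rintro x y ⟨q, hq, rfl⟩
        refine ⟨q⁻¹, Q.inv_mem hq, ?_⟩
        rw [← mul_assoc, ← QuotientGroup.mk_mul]
        simp
      · rintro x y z ⟨q, hq, rfl⟩ ⟨r, hr, rfl⟩
        exact ⟨q * r, Q.mul_mem hq hr, by rw [QuotientGroup.mk_mul, mul_assoc]⟩
    let s : Setoid (P ⧸ B) := ⟨_, hsetoid⟩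
    let rep : (P ⧸ B) → (P ⧸ B) := fun x => (Quotient.mk s x).out
    have hrep : ∀ x, ∃ q ∈ Q, ((q : P) : P ⧸ B) * x = rep x := fun x =>
      @Quotient.mk_out _ s x
    have hrep_inv : ∀ q ∈ Q, ∀ x, rep (((q : P) : P ⧸ B) * x) = rep x := by
      intro q hq x
      have h : Quotient.mk s (((q : P) : P ⧸ B) * x) = Quotient.mk s x :=
        Quotient.sound ⟨q, hq, rfl⟩
      simp only [rep, h]
    choose c hcQ hc using hrep
    refine ⟨fun x => (c x)⁻¹ * (rep x).out, ?_, ?_⟩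
    · intro x
      rw [QuotientGroup.mk_mul, QuotientGroup.mk_inv, QuotientGroup.out_eq']
      rw [inv_mul_eq_iff_eq_mul]
      exact (hc x).symm
    · intro q hq x
      show (c (((q : P) : P ⧸ B) * x))⁻¹ * Quotient.out (rep (((q : P) : P ⧸ B) * x))
        = q * ((c x)⁻¹ * Quotient.out (rep x))
      have hkey : c (((q : P) : P ⧸ B) * x) = c x * q⁻¹ := by
        have h1 : ((c (((q : P) : P ⧸ B) * x) : P) : P ⧸ B) * (((q : P) : P ⧸ B) * x)
            = rep x := by rw [hc, hrep_inv q hq]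
        have h2 : ((c x : P) : P ⧸ B) * x = rep x := hc x
        have hg1 : (((c x)⁻¹ * c (((q : P) : P ⧸ B) * x) * q : P) : P ⧸ B) * x = x := by
          have expand : (((c x)⁻¹ * c (((q : P) : P ⧸ B) * x) * q : P) : P ⧸ B) * x
              = ((c x : P) : P ⧸ B)⁻¹ *
                (((c (((q : P) : P ⧸ B) * x) : P) : P ⧸ B) * (((q : P) : P ⧸ B) * x)) := by
            rw [QuotientGroup.mk_mul, QuotientGroup.mk_mul, QuotientGroup.mk_inv]
            group
          rw [expand, h1, ← h2]
          group
        have hg2 : (c x)⁻¹ * c (((q : P) : P ⧸ B) * x) * q = 1 :=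
          hfix _ (Q.mul_mem (Q.mul_mem (Q.inv_mem (hcQ x)) (hcQ _)) hq) x hg1
        calc c (((q : P) : P ⧸ B) * x)
            = c x * (((c x)⁻¹ * c (((q : P) : P ⧸ B) * x) * q) * q⁻¹) := by group
          _ = c x * q⁻¹ := by rw [hg2, one_mul]
      rw [hrep_inv q hq, hkey, mul_inv_rev, inv_inv, mul_assoc]
  obtain ⟨σ, hσ, hσQ⟩ := hσex
  -- the permutation part
  let eΩ : ((P ⧸ B) × Fin j) ≃ Fin (Fintype.card ((P ⧸ B) × Fin j)) := Fintype.equivFin _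
  let τ : P → Equiv.Perm (Fin (Fintype.card ((P ⧸ B) × Fin j))) := fun p =>
    eΩ.permCongr ((Equiv.mulLeft ((p : P ⧸ B))).prodCongr (Equiv.refl (Fin j)))
  have hτ_apply : ∀ p y, τ p y = eΩ ((p : P ⧸ B) * (eΩ.symm y).1, (eΩ.symm y).2) := by
    intro p y
    simp [τ, Equiv.permCongr_apply, Equiv.prodCongr_apply, Prod.map, Equiv.coe_mulLeft]
  have hτ_inv : ∀ p y, (τ p)⁻¹ y = eΩ (((p : P ⧸ B))⁻¹ * (eΩ.symm y).1, (eΩ.symm y).2) := by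
    intro p y
    rw [Equiv.Perm.inv_def, Equiv.symm_apply_eq, hτ_apply]
    simp [mul_inv_cancel_left]
  have hτ_one : ∀ g : P, (g : P ⧸ B) = 1 → τ g = 1 := by
    intro g hg
    ext y
    rw [hτ_apply, hg]
    simp
  have hτ_mul : ∀ p p', τ (p * p') = τ p * τ p' := by
    intro p p'
    ext y
    rw [Equiv.Perm.mul_apply]
    simp only [hτ_apply, QuotientGroup.mk_mul, Equiv.symm_apply_apply, mul_assoc]
  refine ⟨Fintype.card ((P ⧸ B) × Fin j),
    MonoidHom.mk' (fun p =>
      ⟨fun y => e (cocycle σ hσ p (eΩ.symm y).1) (eΩ.symm y).2, τ p⟩) ?_, ?_, ?_, ?_⟩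
  · -- multiplicativity
    intro p p'
    refine SemidirectProduct.ext ?_ ?_
    · show _ = _ * (wreathHom (Multiplicative ℤ) _ _ (τ p)) _
      funext y
      show e (cocycle σ hσ (p * p') (eΩ.symm y).1) (eΩ.symm y).2
        = e (cocycle σ hσ p (eΩ.symm y).1) (eΩ.symm y).2 *
          e (cocycle σ hσ p' (eΩ.symm ((τ p)⁻¹ • y)).1) (eΩ.symm ((τ p)⁻¹ • y)).2
      rw [Equiv.Perm.smul_def, hτ_inv, Equiv.symm_apply_apply]
      rw [cocycle_mul, map_mul, Pi.mul_apply]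
    · exact hτ_mul p p'
  · -- injectivity
    rw [injective_iff_map_eq_one]
    intro p hp
    have hright : τ p = 1 := congrArg SemidirectProduct.right hp
    have hleft : (fun y => e (cocycle σ hσ p (eΩ.symm y).1) (eΩ.symm y).2) = 1 :=
      congrArg SemidirectProduct.left hp
    have hmk1 : (p : P ⧸ B) = 1 := by
      have h := congrArg (fun s : Equiv.Perm _ => s (eΩ ((1 : P ⧸ B), (⟨0, hj⟩ : Fin j)))) hright
      simp only [Equiv.Perm.one_apply] at h
      rw [hτ_apply, Equiv.symm_apply_apply] at h
      have := eΩ.injective h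
      have := (Prod.mk.injEq _ _ _ _).mp this
      simpa using this.1
    have hcoc : cocycle σ hσ p (1 : P ⧸ B) = 1 := by
      apply e.injective
      rw [map_one]
      funext i
      have := congrFun hleft (eΩ ((1 : P ⧸ B), i))
      simpa [Equiv.symm_apply_apply] using this
    have h5 : (σ (1 : P ⧸ B))⁻¹ * p * σ (((p : P ⧸ B))⁻¹ * 1) = 1 := by
      have := congrArg Subtype.val hcoc
      simpa [cocycle] using this
    rw [hmk1, inv_one, one_mul] at h5
    calc p = (σ (1 : P ⧸ B)) * ((σ (1 : P ⧸ B))⁻¹ * p * σ (1 : P ⧸ B)) * (σ (1 : P ⧸ B))⁻¹ := by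
          group
      _ = 1 := by rw [h5]; group
  · -- B goes into the base group
    intro b hb
    refine ⟨fun y => e (cocycle σ hσ b (eΩ.symm y).1) (eΩ.symm y).2, ?_⟩
    refine SemidirectProduct.ext ?_ ?_
    · simp [SemidirectProduct.left_inl]
    · rw [SemidirectProduct.right_inl]
      exact hτ_one b ((QuotientGroup.eq_one_iff b).mpr hb)
  · -- Q goes into the top group, acting freely
    intro q hq
    refine ⟨τ q, ?_, ?_⟩
    · have hc1 : ∀ x, cocycle σ hσ q x = 1 := by
        intro x
        apply Subtype.ext
        show (σ x)⁻¹ * q * σ (((q : P ⧸ B))⁻¹ * x) = _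
        rw [← QuotientGroup.mk_inv, hσQ q⁻¹ (Q.inv_mem hq) x]
        simp [mul_assoc]
      refine SemidirectProduct.ext ?_ ?_
      · rw [SemidirectProduct.left_inr]
        funext y
        show e (cocycle σ hσ q (eΩ.symm y).1) (eΩ.symm y).2 = 1
        rw [hc1, map_one]
        rfl
      · rw [SemidirectProduct.right_inr]
        rfl
    · intro hne y hy
      rw [hτ_apply] at hy
      conv_rhs at hy => rw [← Equiv.apply_symm_apply eΩ y]
      have := eΩ.injective hy
      have := (Prod.mk.injEq _ _ _ _).mp this
      exact hne (hτ_one q (by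
        have := hfix q hq (eΩ.symm y).1 this.1
        rw [this]
        simp))
end

section
/- For natural numbers k, l ≥ 1, set E₁ = ℤ ≀_{Ω_k} S_k and E₂ = ℤ ≀_{Ω_l} S_l, and let c₁ ∈ ℤ^{Ω_k} ⊆ E₁ and c₂ ∈ ℤ^{Ω_l} ⊆ E₂ be nontrivial elements of the base groups. Then with m = kl there exist injective homomorphisms β₁ : E₁ → ℤ ≀_{Ω_m} S_m and β₂ : E₂ → ℤ ≀_{Ω_m} S_m such that: β₁(ℤ^{Ω_k}) and β₂(ℤ^{Ω_l}) lie in the base ℤ^{Ω_m}; βᵢ sends the symmetric group factor into S_m, with permutations acting freely mapped to permutations acting freely; and β₁(c₁) = β₂(c₂). -/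
open SemidirectProduct

/-- Base-group homomorphism: `f ↦ (x ↦ c((e⁻¹x)₂) ^ f((e⁻¹x)₁))`. -/
def amalgBase {a b n : ℕ} (e : Fin a × Fin b ≃ Fin n) (c : Fin b → Multiplicative ℤ) :
    (Fin a → Multiplicative ℤ) →* (Fin n → Multiplicative ℤ) where
  toFun f := fun x => c (e.symm x).2 ^ Multiplicative.toAdd (f (e.symm x).1)
  map_one' := by funext x; simp
  map_mul' f g := by funext x; simp [zpow_add]

/-- Permutation homomorphism: `σ ↦ e ∘ (σ × id) ∘ e⁻¹`. -/
def amalgPerm {a b n : ℕ} (e : Fin a × Fin b ≃ Fin n) :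
    Equiv.Perm (Fin a) →* Equiv.Perm (Fin n) where
  toFun σ := (e.symm.trans (Equiv.prodCongr σ (Equiv.refl _))).trans e
  map_one' := by ext x; simp
  map_mul' σ τ := by ext x; simp [Equiv.Perm.mul_apply, Prod.map]

lemma amalgPerm_apply {a b n : ℕ} (e : Fin a × Fin b ≃ Fin n) (σ : Equiv.Perm (Fin a))
    (x : Fin n) : amalgPerm e σ x = e (σ (e.symm x).1, (e.symm x).2) := by
  simp [amalgPerm, Equiv.prodCongr_apply, Prod.map]

lemma amalg_compat {a b n : ℕ} (e : Fin a × Fin b ≃ Fin n) (c : Fin b → Multiplicative ℤ)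
    (σ : Equiv.Perm (Fin a)) :
    ((inl : _ →* WreathProduct (Multiplicative ℤ) (Equiv.Perm (Fin n)) (Fin n)).comp
        (amalgBase e c)).comp
        ((wreathHom (Multiplicative ℤ) (Equiv.Perm (Fin a)) (Fin a)) σ).toMonoidHom =
      (MulAut.conj (((inr : _ →* WreathProduct (Multiplicative ℤ) (Equiv.Perm (Fin n))
          (Fin n))).comp (amalgPerm e) σ)).toMonoidHom.comp
        (inl.comp (amalgBase e c)) := by
  ext f : 1
  simp only [MonoidHom.comp_apply, MulEquiv.coe_toMonoidHom, MulAut.conj_apply]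
  rw [← map_inv inr, ← SemidirectProduct.inl_aut]
  congr 1
  funext x
  show c (e.symm x).2 ^ Multiplicative.toAdd (f (σ⁻¹ • (e.symm x).1)) =
    amalgBase e c f ((amalgPerm e σ)⁻¹ • x)
  have h1 : (amalgPerm e σ)⁻¹ = amalgPerm e σ⁻¹ := (map_inv _ _).symm
  simp only [amalgBase, MonoidHom.coe_mk, OneHom.coe_mk, h1, amalgPerm_apply,
    Equiv.symm_apply_apply, Equiv.Perm.smul_def]

/-- The amalgamating homomorphism. -/
def amalgHom {a b n : ℕ} (e : Fin a × Fin b ≃ Fin n) (c : Fin b → Multiplicative ℤ) :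
    WreathProduct (Multiplicative ℤ) (Equiv.Perm (Fin a)) (Fin a) →*
      WreathProduct (Multiplicative ℤ) (Equiv.Perm (Fin n)) (Fin n) :=
  SemidirectProduct.lift (inl.comp (amalgBase e c)) (inr.comp (amalgPerm e))
    (amalg_compat e c)


lemma amalgHom_inl {a b n : ℕ} (e : Fin a × Fin b ≃ Fin n) (c : Fin b → Multiplicative ℤ)
    (f : Fin a → Multiplicative ℤ) :
    amalgHom e c (inl f) = inl (amalgBase e c f) := by
  simp [amalgHom]

lemma amalgHom_inr {a b n : ℕ} (e : Fin a × Fin b ≃ Fin n) (c : Fin b → Multiplicative ℤ)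
    (σ : Equiv.Perm (Fin a)) :
    amalgHom e c (inr σ) = inr (amalgPerm e σ) := by
  simp [amalgHom]

lemma amalgHom_mk {a b n : ℕ} (e : Fin a × Fin b ≃ Fin n) (c : Fin b → Multiplicative ℤ)
    (f : Fin a → Multiplicative ℤ) (σ : Equiv.Perm (Fin a)) :
    amalgHom e c ⟨f, σ⟩ = ⟨amalgBase e c f, amalgPerm e σ⟩ := by
  rw [SemidirectProduct.mk_eq_inl_mul_inr, map_mul, amalgHom_inl, amalgHom_inr,
    ← SemidirectProduct.mk_eq_inl_mul_inr]

lemma amalgHom_injective {a b n : ℕ} (e : Fin a × Fin b ≃ Fin n)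
    (c : Fin b → Multiplicative ℤ) (hc : c ≠ 1) : Function.Injective (amalgHom e c) := by
  rw [injective_iff_map_eq_one]
  rintro ⟨f, σ⟩ h
  rw [amalgHom_mk] at h
  obtain ⟨j₀, hj₀⟩ : ∃ j, c j ≠ 1 := by
    by_contra h'; push_neg at h'; exact hc (funext h')
  have hleft : amalgBase e c f = 1 := congrArg SemidirectProduct.left h
  have hright : amalgPerm e σ = 1 := congrArg SemidirectProduct.right h
  have hσ : σ = 1 := by
    ext i
    have h2 : amalgPerm e σ (e (i, j₀)) = e (i, j₀) := by rw [hright]; rfl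
    rw [amalgPerm_apply, Equiv.symm_apply_apply] at h2
    have := e.injective h2
    exact congrArg Fin.val (congrArg Prod.fst this)
  have hf : f = 1 := by
    funext i
    have h2 : amalgBase e c f (e (i, j₀)) = 1 := by rw [hleft]; rfl
    simp only [amalgBase, MonoidHom.coe_mk, OneHom.coe_mk, Equiv.symm_apply_apply] at h2
    have h3 : Multiplicative.toAdd (f i) * Multiplicative.toAdd (c j₀) = 0 := by
      have := congrArg Multiplicative.toAdd h2
      simpa [toAdd_zpow, mul_comm] using this
    have h4 : Multiplicative.toAdd (c j₀) ≠ 0 := fun hz => hj₀ (by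
      have : Multiplicative.toAdd (c j₀) = Multiplicative.toAdd (1 : Multiplicative ℤ) := hz
      exact Multiplicative.toAdd.injective this)
    have h5 : Multiplicative.toAdd (f i) = 0 := by
      rcases mul_eq_zero.1 h3 with h | h
      · exact h
      · exact absurd h h4
    exact Multiplicative.toAdd.injective h5
  rw [hσ, hf]; rfl
/-- Amalgamating two complete monomial groups `ℤ ≀_{Ω_k} S_k` and `ℤ ≀_{Ω_l} S_l`
inside `ℤ ≀_{Ω_{kl}} S_{kl}`: there are injective homomorphisms sending bases into the
base and symmetric groups into the symmetric group (freely acting permutations going to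
freely acting permutations), matching the two chosen nontrivial base elements. -/
theorem exists_monomial_amalgamation (k l : ℕ) (hk : 1 ≤ k) (hl : 1 ≤ l)
    (c₁ : Fin k → Multiplicative ℤ) (hc₁ : c₁ ≠ 1)
    (c₂ : Fin l → Multiplicative ℤ) (hc₂ : c₂ ≠ 1) :
    ∃ (β₁ : WreathProduct (Multiplicative ℤ) (Equiv.Perm (Fin k)) (Fin k) →*
            WreathProduct (Multiplicative ℤ) (Equiv.Perm (Fin (k * l))) (Fin (k * l)))
      (β₂ : WreathProduct (Multiplicative ℤ) (Equiv.Perm (Fin l)) (Fin l) →*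
            WreathProduct (Multiplicative ℤ) (Equiv.Perm (Fin (k * l))) (Fin (k * l))),
      Function.Injective β₁ ∧ Function.Injective β₂ ∧
      (∀ f : Fin k → Multiplicative ℤ, ∃ g : Fin (k * l) → Multiplicative ℤ,
        β₁ (SemidirectProduct.inl f) = SemidirectProduct.inl g) ∧
      (∀ f : Fin l → Multiplicative ℤ, ∃ g : Fin (k * l) → Multiplicative ℤ,
        β₂ (SemidirectProduct.inl f) = SemidirectProduct.inl g) ∧
      (∀ σ : Equiv.Perm (Fin k), ∃ τ : Equiv.Perm (Fin (k * l)),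
        β₁ (SemidirectProduct.inr σ) = SemidirectProduct.inr τ ∧
          ((∀ x, σ x ≠ x) → ∀ y, τ y ≠ y)) ∧
      (∀ σ : Equiv.Perm (Fin l), ∃ τ : Equiv.Perm (Fin (k * l)),
        β₂ (SemidirectProduct.inr σ) = SemidirectProduct.inr τ ∧
          ((∀ x, σ x ≠ x) → ∀ y, τ y ≠ y)) ∧
      β₁ (SemidirectProduct.inl c₁) = β₂ (SemidirectProduct.inl c₂) := by
  classical
  set e₁ : Fin k × Fin l ≃ Fin (k * l) := finProdFinEquiv
  set e₂ : Fin l × Fin k ≃ Fin (k * l) := (Equiv.prodComm _ _).trans finProdFinEquiv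
  refine ⟨amalgHom e₁ c₂, amalgHom e₂ c₁, amalgHom_injective _ _ hc₂,
    amalgHom_injective _ _ hc₁, ?_, ?_, ?_, ?_, ?_⟩
  · exact fun f => ⟨_, amalgHom_inl e₁ c₂ f⟩
  · exact fun f => ⟨_, amalgHom_inl e₂ c₁ f⟩
  · intro σ
    refine ⟨amalgPerm e₁ σ, amalgHom_inr e₁ c₂ σ, fun hfree y hy => ?_⟩
    rw [amalgPerm_apply] at hy
    have := e₁.injective (hy.trans (e₁.apply_symm_apply y).symm)
    exact hfree _ (congrArg Prod.fst this)
  · intro σ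
    refine ⟨amalgPerm e₂ σ, amalgHom_inr e₂ c₁ σ, fun hfree y hy => ?_⟩
    rw [amalgPerm_apply] at hy
    have := e₂.injective (hy.trans (e₂.apply_symm_apply y).symm)
    exact hfree _ (congrArg Prod.fst this)
  · rw [amalgHom_inl, amalgHom_inl]
    congr 1
    funext x
    have hx : e₂.symm x = ((e₁.symm x).2, (e₁.symm x).1) := rfl
    simp only [amalgBase, MonoidHom.coe_mk, OneHom.coe_mk, hx]
    apply Multiplicative.toAdd.injective
    rw [toAdd_zpow, toAdd_zpow]
    simp only [smul_eq_mul]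
    exact mul_comm _ _
end

section
/- Let A ◁ G be a torsion-free abelian normal subgroup of a group G, and for n ≥ 1 let P_n be the quotient of the semidirect product A ⋊ G (G acting on A by conjugation) by the normal subgroup N_n = {(aⁿ, a⁻¹) : a ∈ A}. Then: (1) N_n is indeed normal in A ⋊ G; (2) the map ξ_n : G → P_n, g ↦ [(1,g)], is an injective homomorphism; (3) B_n := image of A×{1} in P_n is isomorphic to A; and (4) P_n / B_n is isomorphic to G/A. -/
/-- Let `A ◁ G` be a torsion-free abelian normal subgroup and `n ≥ 1`. In the
semidirect product `A ⋊ G` (with `G` acting by conjugation), the set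
`N_n = {(aⁿ, a⁻¹) : a ∈ A}` is a normal subgroup; the map `ξ_n : g ↦ [(1, g)]` into
`P_n = (A ⋊ G)/N_n` is an injective homomorphism; `B_n`, the image of `A × {1}` in
`P_n`, is isomorphic to `A`; and `P_n / B_n` is isomorphic to `G/A`. -/
theorem semidirect_quotient_root_construction (G : Type*) [Group G]
    (A : Subgroup G) [A.Normal]
    (habel : ∀ x y : ↥A, x * y = y * x) (htf : ∀ g : ↥A, g ≠ 1 → ¬IsOfFinOrder g)
    (n : ℕ) (hn : 1 ≤ n) :
    ∃ N : Subgroup (↥A ⋊[MulAut.conjNormal] G),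
      (N : Set (↥A ⋊[MulAut.conjNormal] G))
          = {p | ∃ a : ↥A, p = ⟨a ^ n, (a : G)⁻¹⟩} ∧
      ∃ _hN : N.Normal,
        Function.Injective ((QuotientGroup.mk' N).comp SemidirectProduct.inr) ∧
        Nonempty
          (↥(((QuotientGroup.mk' N).comp SemidirectProduct.inl).range) ≃* ↥A) ∧
        ∃ _hB : (((QuotientGroup.mk' N).comp SemidirectProduct.inl).range).Normal,
          Nonempty
            ((((↥A ⋊[MulAut.conjNormal] G) ⧸ N) ⧸
                ((QuotientGroup.mk' N).comp SemidirectProduct.inl).range)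
              ≃* (G ⧸ A)) := by
  classical
  have hc : ∀ x y : ↥A, Commute x y := habel
  have hAcomm : ∀ x y : G, x ∈ A → y ∈ A → Commute x y := by
    intro x y hx hy
    exact congrArg Subtype.val (habel ⟨x, hx⟩ ⟨y, hy⟩)
  have hroot : ∀ a : ↥A, a ^ n = 1 → a = 1 := by
    intro a ha
    by_contra h
    exact htf a h (isOfFinOrder_iff_pow_eq_one.mpr ⟨n, hn, ha⟩)
  set S : Set (↥A ⋊[MulAut.conjNormal] G) :=
    {p | ∃ a : ↥A, p = ⟨a ^ n, (a : G)⁻¹⟩} with hS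
  have hone : (1 : ↥A ⋊[MulAut.conjNormal] G) ∈ S := ⟨1, by ext <;> simp⟩
  have hmul : ∀ {p q}, p ∈ S → q ∈ S → p * q ∈ S := by
    rintro p q ⟨a, rfl⟩ ⟨b, rfl⟩
    refine ⟨a * b, ?_⟩
    ext
    · show ((a ^ n : ↥A) : G) * _ = (((a * b) ^ n : ↥A) : G)
      rw [(hc a b).mul_pow]
      push_cast
      rw [MulAut.conjNormal_apply]
      push_cast
      have h : Commute (a : G) ((b : G) ^ n) :=
        Commute.pow_right (congrArg Subtype.val (habel a b)) n
      rw [inv_inv, h.inv_left.eq]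
      group
    · show ((a : G))⁻¹ * ((b : G))⁻¹ = (((a * b : ↥A) : G))⁻¹
      have hab : (a : G) * b = (b : G) * a := congrArg Subtype.val (habel a b)
      push_cast
      rw [mul_inv_rev]
      exact Commute.inv_inv hab
  have hinv : ∀ {p}, p ∈ S → p⁻¹ ∈ S := by
    rintro p ⟨a, rfl⟩
    refine ⟨a⁻¹, ?_⟩
    ext
    · show ((MulAut.conjNormal ((a : G)⁻¹)⁻¹ ((a ^ n)⁻¹ : ↥A) : ↥A) : G)
          = (((a⁻¹ : ↥A) ^ n : ↥A) : G)
      simp only [MulAut.conjNormal_apply]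
      push_cast
      group
    · show ((a : G)⁻¹)⁻¹ = ((a⁻¹ : ↥A) : G)⁻¹
      push_cast
      group
  set N : Subgroup (↥A ⋊[MulAut.conjNormal] G) :=
    { carrier := S
      one_mem' := hone
      mul_mem' := hmul
      inv_mem' := hinv } with hNdef
  have hmemN : ∀ p, p ∈ N ↔ ∃ a : ↥A, p = ⟨a ^ n, (a : G)⁻¹⟩ := fun _ => Iff.rfl
  have hNnormal : N.Normal := by
    constructor
    rintro p ⟨a, rfl⟩ g
    refine ⟨MulAut.conjNormal g.right a, ?_⟩
    ext
    · show (_ : G) = _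
      push_cast
      simp only [MulAut.conjNormal_apply, SemidirectProduct.mul_left,
        SemidirectProduct.mul_right, SemidirectProduct.inv_left,
        SemidirectProduct.inv_right]
      push_cast
      simp only [MulAut.conjNormal_apply]
      push_cast
      set b : G := ↑g.left with hb
      set r : G := g.right with hr
      set x : G := ↑a with hx
      have key : Commute b (r * (x ^ n * x⁻¹) * r⁻¹) :=
        hAcomm _ _ g.left.2
          (‹A.Normal›.conj_mem _ (A.mul_mem (A.pow_mem a.2 n) (A.inv_mem a.2)) r)
      have key2 : b * (r * (x ^ n * x⁻¹) * r⁻¹) * b⁻¹ = r * (x ^ n * x⁻¹) * r⁻¹ := by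
        rw [key.eq]; group
      calc b * (r * x ^ n * r⁻¹) * (r * x⁻¹ * (r⁻¹ * b⁻¹ * r⁻¹⁻¹) * (r * x⁻¹)⁻¹)
          = (b * (r * (x ^ n * x⁻¹) * r⁻¹) * b⁻¹) * (r * x * r⁻¹) := by group
        _ = (r * (x ^ n * x⁻¹) * r⁻¹) * (r * x * r⁻¹) := by rw [key2]
        _ = (r * x * r⁻¹) ^ n := by rw [conj_pow]; group
    · show (_ : G) = _
      simp only [SemidirectProduct.mul_right, SemidirectProduct.inv_right]
      simp only [MulAut.conjNormal_apply]
      group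
  haveI := hNnormal
  have hBnormal :
      (((QuotientGroup.mk' N).comp
        (SemidirectProduct.inl : ↥A →* ↥A ⋊[MulAut.conjNormal] G)).range).Normal := by
    have : ((QuotientGroup.mk' N).comp (SemidirectProduct.inl : ↥A →* _)).range
        = Subgroup.map (QuotientGroup.mk' N) (SemidirectProduct.inl : ↥A →* _).range :=
      MonoidHom.range_comp _ _
    rw [this]
    haveI : (SemidirectProduct.inl : ↥A →* ↥A ⋊[MulAut.conjNormal] G).range.Normal := by
      rw [SemidirectProduct.range_inl_eq_ker_rightHom]
      exact MonoidHom.normal_ker _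
    exact Subgroup.Normal.map ‹_› _ (QuotientGroup.mk'_surjective N)
  haveI := hBnormal
  refine ⟨N, rfl, hNnormal, ?_, ?_, hBnormal, ?_⟩
  -- injectivity of ξ_n
  · rw [← MonoidHom.ker_eq_bot_iff]
    rw [eq_bot_iff]
    intro g hg
    have h0 : ((QuotientGroup.mk' N).comp SemidirectProduct.inr) g = 1 := hg
    have : SemidirectProduct.inr g ∈ N :=
      (QuotientGroup.eq_one_iff _).mp (by simpa using h0)
    obtain ⟨a, ha⟩ := this
    have h1 : (1 : ↥A) = a ^ n := congrArg SemidirectProduct.left ha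
    have h2 : g = (a : G)⁻¹ := congrArg SemidirectProduct.right ha
    have ha1 : a = 1 := hroot a h1.symm
    simp [h2, ha1]
  -- B_n ≃ A
  · have hinj : Function.Injective
        ((QuotientGroup.mk' N).comp (SemidirectProduct.inl : ↥A →* _)) := by
      rw [← MonoidHom.ker_eq_bot_iff, eq_bot_iff]
      intro x hx
      have h0 : ((QuotientGroup.mk' N).comp SemidirectProduct.inl) x = 1 := hx
      have : SemidirectProduct.inl x ∈ N :=
        (QuotientGroup.eq_one_iff _).mp (by simpa using h0)
      obtain ⟨a, ha⟩ := this
      have h1 : x = a ^ n := congrArg SemidirectProduct.left ha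
      have h2 : (1 : G) = (a : G)⁻¹ := congrArg SemidirectProduct.right ha
      have ha1 : a = 1 := by
        ext
        simpa using h2.symm
      exact Subgroup.mem_bot.mpr (by rw [h1, ha1, one_pow])
    exact ⟨(MonoidHom.ofInjective hinj).symm⟩
  -- P_n / B_n ≃ G / A
  · set f : (↥A ⋊[MulAut.conjNormal] G) →* G ⧸ A :=
      (QuotientGroup.mk' A).comp SemidirectProduct.rightHom with hf
    have hNle : ∀ p ∈ N, f p = 1 := by
      rintro p ⟨a, rfl⟩
      show (QuotientGroup.mk' A) ((a : G))⁻¹ = 1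
      simpa using (QuotientGroup.eq_one_iff _).mpr (A.inv_mem a.2)
    set F : ((↥A ⋊[MulAut.conjNormal] G) ⧸ N) →* G ⧸ A :=
      QuotientGroup.lift N f hNle with hF
    have hFmk : ∀ p, F (QuotientGroup.mk' N p) = f p := fun p => rfl
    have hFsurj : Function.Surjective F := by
      intro q
      obtain ⟨g, rfl⟩ := QuotientGroup.mk'_surjective A q
      exact ⟨QuotientGroup.mk' N (SemidirectProduct.inr g), by
        rw [hFmk]; simp [hf]⟩
    have hker : F.ker
        = ((QuotientGroup.mk' N).comp (SemidirectProduct.inl : ↥A →* _)).range := by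
      ext q
      constructor
      · intro hq
        obtain ⟨p, rfl⟩ := QuotientGroup.mk'_surjective N q
        have hfp : f p = 1 := by rw [← hFmk]; exact hq
        have hr : p.right ∈ A := by simpa [hf] using hfp
        set c : ↥A := ⟨p.right, hr⟩ with hcdef
        refine ⟨p.left * MulAut.conjNormal p.right (c ^ n), ?_⟩
        have hw : (⟨c ^ n, (c : G)⁻¹⟩ : ↥A ⋊[MulAut.conjNormal] G) ∈ N := ⟨c, rfl⟩
        have heq : p * ⟨c ^ n, (c : G)⁻¹⟩
            = SemidirectProduct.inl (p.left * MulAut.conjNormal p.right (c ^ n)) := by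
          ext
          · rfl
          · show p.right * (c : G)⁻¹ = 1
            simp [hcdef]
        calc ((QuotientGroup.mk' N).comp SemidirectProduct.inl)
              (p.left * MulAut.conjNormal p.right (c ^ n))
            = QuotientGroup.mk' N (p * ⟨c ^ n, (c : G)⁻¹⟩) :=
              congrArg (QuotientGroup.mk' N) heq.symm
          _ = QuotientGroup.mk' N p := by
              have h1 : (QuotientGroup.mk' N)
                  (⟨c ^ n, (c : G)⁻¹⟩ : ↥A ⋊[MulAut.conjNormal] G) = 1 :=
                (QuotientGroup.eq_one_iff _).mpr hw
              rw [map_mul, h1, mul_one]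
      · rintro ⟨a, rfl⟩
        show F (QuotientGroup.mk' N (SemidirectProduct.inl a)) = 1
        rw [hFmk]
        simp [hf]
    exact ⟨(QuotientGroup.quotientMulEquivOfEq hker.symm).trans
      (QuotientGroup.quotientKerEquivOfSurjective F hFsurj)⟩
end

section
/- Let A ◁ G be a torsion-free abelian normal subgroup with Q := G/A finite, and let n be a positive integer divisible by |Q|. Let P_n = (A ⋊ G)/N_n with N_n = {(aⁿ, a⁻¹) : a ∈ A} and B_n the image of A × {1}. Then the extension B_n → P_n → Q splits, i.e. P_n is isomorphic to a semidirect product B_n ⋊ Q. -/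
/-- Let `A ◁ G` be a torsion-free abelian normal subgroup with `Q = G/A` finite, and
let `n` be a positive integer divisible by `|Q|`. Form `P_n = (A ⋊ G)/N_n` where
`N_n = {(aⁿ, a⁻¹) : a ∈ A}`, and let `B_n` be the image of `A × {1}` in `P_n`. Then the
extension `B_n → P_n → Q` splits: `B_n` has a complement in `P_n`, and this complement
is isomorphic to `Q = G/A` (so `P_n ≅ B_n ⋊ Q`). -/
theorem semidirect_quotient_root_splits (G : Type*) [Group G]
    (A : Subgroup G) [A.Normal]
    (habel : ∀ x y : ↥A, x * y = y * x) (htf : ∀ g : ↥A, g ≠ 1 → ¬IsOfFinOrder g)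
    [Finite (G ⧸ A)]
    (n : ℕ) (hn : 0 < n) (hdvd : Nat.card (G ⧸ A) ∣ n) :
    ∃ N : Subgroup (↥A ⋊[MulAut.conjNormal] G),
      (N : Set (↥A ⋊[MulAut.conjNormal] G))
          = {p | ∃ a : ↥A, p = ⟨a ^ n, (a : G)⁻¹⟩} ∧
      ∃ _hN : N.Normal,
        ∃ C : Subgroup ((↥A ⋊[MulAut.conjNormal] G) ⧸ N),
          Subgroup.IsComplement'
            (((QuotientGroup.mk' N).comp SemidirectProduct.inl).range) C ∧
          Nonempty (↥C ≃* (G ⧸ A)) := by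
  classical
  letI : CommGroup ↥A := { (inferInstance : Group ↥A) with mul_comm := habel }
  letI : Fintype (G ⧸ A) := Fintype.ofFinite _
  set φ : G →* MulAut ↥A := MulAut.conjNormal with hφ
  have hAconj : ∀ (a x : ↥A), φ (a : G) x = x := by
    intro a x
    ext
    rw [hφ, MulAut.conjNormal_apply]
    have h := congrArg (Subtype.val) (habel a x)
    push_cast at h
    rw [mul_inv_eq_iff_eq_mul]
    exact h
  have hAconj' : ∀ (a : ↥A) (g : G) (x : ↥A), g = (a : G) → φ g x = x := by
    rintro a g x rfl; exact hAconj a x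
  -- the normal subgroup N
  have hmul : ∀ a b : ↥A,
      (⟨a ^ n, (a : G)⁻¹⟩ * ⟨b ^ n, (b : G)⁻¹⟩ : ↥A ⋊[MulAut.conjNormal] G)
        = ⟨(b * a) ^ n, ((b * a : ↥A) : G)⁻¹⟩ := by
    intro a b
    refine SemidirectProduct.ext ?_ ?_
    · show (a : ↥A) ^ n * φ ((a : G))⁻¹ (b ^ n) = (b * a) ^ n
      rw [hAconj' a⁻¹ _ _ (by simp), mul_pow, mul_comm]
    · show ((a : G))⁻¹ * ((b : G))⁻¹ = ((b * a : ↥A) : G)⁻¹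
      push_cast
      rw [mul_inv_rev]
  let N : Subgroup (↥A ⋊[MulAut.conjNormal] G) :=
    { carrier := {p | ∃ a : ↥A, p = ⟨a ^ n, (a : G)⁻¹⟩}
      one_mem' := ⟨1, by refine SemidirectProduct.ext ?_ ?_ <;> simp⟩
      mul_mem' := by rintro p q ⟨a, rfl⟩ ⟨b, rfl⟩; exact ⟨b * a, hmul a b⟩
      inv_mem' := by
        rintro p ⟨a, rfl⟩
        refine ⟨a⁻¹, ?_⟩
        refine SemidirectProduct.ext ?_ ?_
        · show φ (((a : G))⁻¹)⁻¹ ((a ^ n)⁻¹) = (a⁻¹) ^ n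
          rw [inv_inv, hAconj, inv_pow]
        · show (((a : G))⁻¹)⁻¹ = ((a⁻¹ : ↥A) : G)⁻¹
          simp }
  have hmemN : ∀ p, p ∈ N ↔ ∃ a : ↥A, p = ⟨a ^ n, (a : G)⁻¹⟩ := fun _ => Iff.rfl
  have hNnormal : N.Normal := by
    constructor
    rintro x ⟨a, rfl⟩ g
    refine ⟨φ g.right a, ?_⟩
    refine SemidirectProduct.ext ?_ ?_
    · show g.left * φ g.right (a ^ n) * φ (g.right * ((a:G))⁻¹) (φ (g.right⁻¹) (g.left⁻¹))
        = (φ g.right a) ^ n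
      have e0 : g.right * ((a : G))⁻¹ * g.right⁻¹ = (((φ g.right a)⁻¹ : ↥A) : G) := by
        push_cast
        rw [hφ, MulAut.conjNormal_apply]
        group
      have e1 : φ (g.right * ((a : G))⁻¹) (φ (g.right⁻¹) (g.left⁻¹)) = g.left⁻¹ := by
        rw [← MulAut.mul_apply, ← map_mul, mul_assoc] at *
        rw [hAconj' ((φ g.right a)⁻¹) _ _ e0]
      rw [e1, map_pow, mul_comm g.left, mul_inv_cancel_right]
    · show g.right * ((a : G))⁻¹ * g.right⁻¹ = ((φ g.right a : ↥A) : G)⁻¹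
      rw [hφ, MulAut.conjNormal_apply]
      group
  refine ⟨N, rfl, hNnormal, ?_⟩
  -- the projection to Q = G/A
  let π : (↥A ⋊[MulAut.conjNormal] G) ⧸ N →* G ⧸ A :=
    QuotientGroup.lift N ((QuotientGroup.mk' A).comp SemidirectProduct.rightHom)
      (by
        rintro x ⟨a, rfl⟩
        show QuotientGroup.mk ((a : G))⁻¹ = (1 : G ⧸ A)
        rw [QuotientGroup.eq_one_iff]
        exact A.inv_mem a.2)
  have hπmk : ∀ x : ↥A ⋊[MulAut.conjNormal] G,
      π (QuotientGroup.mk x) = QuotientGroup.mk x.right := fun _ => rfl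
  -- a set-theoretic section of G → Q
  let s : G ⧸ A → G := fun q => q.out
  have hs : ∀ q, (QuotientGroup.mk (s q) : G ⧸ A) = q := fun q => QuotientGroup.out_eq' q
  -- the factor set
  have hfmem : ∀ q r : G ⧸ A, s q * s r * (s (q * r))⁻¹ ∈ A := by
    intro q r
    have h3 : QuotientGroup.mk' A (s q * s r * (s (q * r))⁻¹) = 1 := by
      rw [map_mul, map_mul, map_inv]
      show QuotientGroup.mk (s q) * QuotientGroup.mk (s r)
          * (QuotientGroup.mk (s (q * r)))⁻¹ = 1
      rw [hs, hs, hs, mul_inv_cancel]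
    exact (QuotientGroup.eq_one_iff _).mp h3
  let f : G ⧸ A → G ⧸ A → ↥A := fun q r => ⟨s q * s r * (s (q * r))⁻¹, hfmem q r⟩
  have hf : ∀ q r, ((f q r : ↥A) : G) = s q * s r * (s (q * r))⁻¹ := fun _ _ => rfl
  -- cocycle identity
  have hcoc : ∀ q r t, f q r * f (q * r) t = φ (s q) (f r t) * f q (r * t) := by
    intro q r t
    ext
    push_cast [hf, hφ, MulAut.conjNormal_apply, mul_assoc q r t]
    group
  -- the product of the factor set
  let m : G ⧸ A → ↥A := fun q => ∏ r, f q r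
  set c := Fintype.card (G ⧸ A) with hc
  obtain ⟨k, hk⟩ : ∃ k, n = c * k := by
    obtain ⟨k, hk⟩ := hdvd
    exact ⟨k, by rw [hk, hc, Nat.card_eq_fintype_card]⟩
  have hm : ∀ q r, f q r ^ c * m (q * r) = φ (s q) (m r) * m q := by
    intro q r
    calc f q r ^ c * m (q * r) = ∏ t, (f q r * f (q * r) t) := by
          rw [Finset.prod_mul_distrib, Finset.prod_const, Finset.card_univ]
      _ = ∏ t, (φ (s q) (f r t) * f q (r * t)) :=
          Finset.prod_congr rfl (fun t _ => hcoc q r t)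
      _ = φ (s q) (m r) * m q := by
          rw [Finset.prod_mul_distrib, ← map_prod]
          congr 1
          exact Fintype.prod_equiv (Equiv.mulLeft r) _ _ (fun t => rfl)
  let u : G ⧸ A → ↥A := fun q => m q ^ k
  have hu : ∀ q r, f q r ^ n = φ (s q) (u r) * u q * (u (q * r))⁻¹ := by
    intro q r
    have h2 := eq_mul_inv_of_mul_eq (hm q r)
    rw [hk, pow_mul, h2, mul_pow, mul_pow, inv_pow, map_pow]
  -- the splitting homomorphism
  let σ0 : G ⧸ A → (↥A ⋊[MulAut.conjNormal] G) ⧸ N :=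
    fun q => QuotientGroup.mk ⟨(u q)⁻¹, s q⟩
  have hσ : ∀ q r, σ0 (q * r) = σ0 q * σ0 r := by
    intro q r
    show QuotientGroup.mk _ =
      QuotientGroup.mk ((⟨(u q)⁻¹, s q⟩ : ↥A ⋊[MulAut.conjNormal] G) * ⟨(u r)⁻¹, s r⟩)
    rw [QuotientGroup.eq]
    refine (hmemN _).mpr ⟨φ ((s (q * r))⁻¹) ((f q r)⁻¹), ?_⟩
    have key : u (q * r) * ((u q)⁻¹ * (φ (s q) (u r))⁻¹) = ((f q r) ^ n)⁻¹ := by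
      rw [hu q r]
      group
    refine SemidirectProduct.ext ?_ ?_
    · show φ ((s (q * r))⁻¹) ((u (q * r))⁻¹)⁻¹
          * φ ((s (q * r))⁻¹) ((u q)⁻¹ * φ (s q) ((u r)⁻¹))
          = (φ ((s (q * r))⁻¹) ((f q r)⁻¹)) ^ n
      rw [← map_pow, ← map_mul, inv_inv, inv_pow]
      congr 1
      rw [map_inv, ← key]
    · show (s (q * r))⁻¹ * (s q * s r) = ((φ ((s (q * r))⁻¹) ((f q r)⁻¹) : ↥A) : G)⁻¹
      push_cast [hφ, MulAut.conjNormal_apply, hf]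
      group
  let σ : (G ⧸ A) →* (↥A ⋊[MulAut.conjNormal] G) ⧸ N :=
    MonoidHom.mk' σ0 (fun q r => hσ q r)
  have hπσ : ∀ q, π (σ q) = q := by
    intro q
    show π (QuotientGroup.mk _) = q
    rw [hπmk]
    exact hs q
  have hσinj : Function.Injective σ := by
    intro q r h
    have h2 := congrArg π h
    rwa [hπσ, hπσ] at h2
  refine ⟨σ.range, ?_, ⟨(MonoidHom.ofInjective hσinj).symm⟩⟩
  have hker : ((QuotientGroup.mk' N).comp SemidirectProduct.inl).range = π.ker := by
    apply le_antisymm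
    · rintro _ ⟨a, rfl⟩
      show π (QuotientGroup.mk (SemidirectProduct.inl a)) = 1
      rw [hπmk]
      show QuotientGroup.mk (1 : G) = (1 : G ⧸ A)
      simp
    · rintro p hp
      obtain ⟨x, rfl⟩ := QuotientGroup.mk_surjective p
      have hx : QuotientGroup.mk x.right = (1 : G ⧸ A) := hp
      have hxA : x.right ∈ A := (QuotientGroup.eq_one_iff _).mp hx
      set c₀ : ↥A := ⟨x.right, hxA⟩ with hc₀
      refine ⟨x.left * c₀ ^ n, ?_⟩
      show QuotientGroup.mk (SemidirectProduct.inl (x.left * c₀ ^ n)) = QuotientGroup.mk x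
      rw [QuotientGroup.eq]
      refine (hmemN _).mpr ⟨c₀⁻¹, ?_⟩
      refine SemidirectProduct.ext ?_ ?_
      · simp only [SemidirectProduct.mul_left, SemidirectProduct.inv_left,
          SemidirectProduct.inv_right, SemidirectProduct.left_inl, SemidirectProduct.right_inl,
          inv_one, map_one, MulAut.one_apply]
        rw [mul_inv_rev, inv_pow, mul_assoc, inv_mul_cancel, mul_one]
      · simp only [SemidirectProduct.mul_right, SemidirectProduct.inv_right,
          SemidirectProduct.right_inl, inv_one, one_mul]
        simp [hc₀]
  rw [hker]
  apply Subgroup.isComplement'_of_disjoint_and_mul_eq_univ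
  · rw [Subgroup.disjoint_def]
    rintro x hx ⟨q, rfl⟩
    have hq1 : q = 1 := by rw [← hπσ q]; exact hx
    rw [hq1, map_one]
  · rw [Set.eq_univ_iff_forall]
    intro p
    rw [Set.mem_mul]
    refine ⟨p * (σ (π p))⁻¹, ?_, σ (π p), ⟨π p, rfl⟩, by group⟩
    show π (p * (σ (π p))⁻¹) = 1
    rw [map_mul, map_inv, hπσ, mul_inv_cancel]
end

section
/- Let G be a finitely generated group and A an infinite virtually cyclic subgroup of G. Suppose there exists a homomorphism φ : G → P with P finitely generated virtually abelian such that φ(A) is infinite. Then there exist a finite-index subgroup K ≤ G and a homomorphism ψ : K → ℝ with ψ(K ∩ A) ≠ {0}. -/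
/-- A group is virtually cyclic if it has a cyclic subgroup of finite index. -/
def IsVirtuallyCyclic (G : Type*) [Group G] : Prop :=
  ∃ H : Subgroup G, H.FiniteIndex ∧ ∃ g : G, H = Subgroup.zpowers g

/-- A group is virtually abelian if it has an abelian subgroup of finite index. -/
def VirtuallyAbelian (G : Type*) [Group G] : Prop :=
  ∃ H : Subgroup G, H.FiniteIndex ∧ ∀ x ∈ H, ∀ y ∈ H, x * y = y * x

lemma exists_addHom_to_real {M : Type*} [AddCommGroup M] (hfg : AddGroup.FG M) (m : M)
    (hm : ∀ n : ℤ, n • m = 0 → n = 0) : ∃ f : M →+ ℝ, f m ≠ 0 := by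
  haveI : Module.Finite ℤ M := Module.Finite.iff_addGroup_fg.mpr hfg
  set T := Submodule.torsion ℤ M with hT
  haveI : Module.Free ℤ (M ⧸ T) := Module.free_of_finite_type_torsion_free'
  have hq : T.mkQ m ≠ 0 := by
    intro h
    rw [Submodule.mkQ_apply, Submodule.Quotient.mk_eq_zero] at h
    obtain ⟨a, ha⟩ := (Submodule.mem_torsion_iff m).mp h
    exact nonZeroDivisors.coe_ne_zero a (hm a ha)
  let b := Module.Free.chooseBasis ℤ (M ⧸ T)
  have hb : b.repr (T.mkQ m) ≠ 0 := fun h => hq (by simpa using b.repr.map_eq_zero_iff.mp h)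
  obtain ⟨i, hi⟩ := DFunLike.ne_iff.mp hb
  refine ⟨(Int.castAddHom ℝ).comp (((b.coord i).comp T.mkQ).toAddMonoidHom), ?_⟩
  simpa [Module.Basis.coord_apply] using hi

/-- Let `G` be finitely generated and `A ≤ G` an infinite virtually cyclic subgroup.
If there is a homomorphism `φ : G → P` to a finitely generated virtually abelian group
with `φ(A)` infinite, then there is a finite-index subgroup `K ≤ G` and a homomorphism
`ψ : K → ℝ` with `ψ(K ∩ A) ≠ {0}`. -/
theorem exists_real_character_of_image_infinite (G : Type*) [Group G] (hG : Group.FG G)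
    (A : Subgroup G) (hAinf : Infinite ↥A) (hAvc : IsVirtuallyCyclic ↥A)
    (P : Type*) [Group P] (hPfg : Group.FG P) (hPva : VirtuallyAbelian P)
    (φ : G →* P) (himg : Infinite ↥(A.map φ)) :
    ∃ K : Subgroup G, K.FiniteIndex ∧
      ∃ ψ : ↥K →* Multiplicative ℝ,
        ∃ x : G, ∃ hx : x ∈ K ⊓ A, ψ ⟨x, hx.1⟩ ≠ 1 := by
  obtain ⟨H, hHfi, hHcomm⟩ := hPva
  haveI := hHfi
  haveI := hPfg
  obtain ⟨Z, hZfi, g, hZ⟩ := hAvc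
  set f : ↥A →* P := φ.comp A.subtype with hf
  have hrange : f.range = A.map φ := by
    rw [hf, MonoidHom.range_comp, Subgroup.range_subtype]
  haveI hinf : Infinite ↥f.range := by rw [hrange]; exact himg
  -- the image of g has infinite order
  have hdvd : (Z.map f.rangeRestrict).index ∣ Z.index :=
    Z.index_map_dvd f.rangeRestrict_surjective
  have hidx : (Z.map f.rangeRestrict).index ≠ 0 := fun h => by
    rw [h] at hdvd
    exact hZfi.index_ne_zero (Nat.eq_zero_of_zero_dvd hdvd)
  have hcard0 : Nat.card ↥f.range = 0 := Nat.card_eq_zero_of_infinite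
  have hcardZ : Nat.card ↥(Z.map f.rangeRestrict) = 0 := by
    have := Subgroup.index_mul_card (Z.map f.rangeRestrict)
    rw [hcard0] at this
    exact (Nat.mul_eq_zero.mp this).resolve_left hidx
  have hZmap : Z.map f.rangeRestrict = Subgroup.zpowers (f.rangeRestrict g) := by
    rw [hZ, MonoidHom.map_zpowers]
  have ho' : orderOf (f.rangeRestrict g) = 0 := by
    rw [← Nat.card_zpowers, ← hZmap]; exact hcardZ
  have hp : orderOf (φ (g : G)) = 0 := by
    have := orderOf_injective f.range.subtype f.range.subtype_injective (f.rangeRestrict g)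
    rw [ho'] at this
    simpa [hf] using this
  set p := φ (g : G) with hpdef
  obtain ⟨n, hn0, -, hpn⟩ := Subgroup.exists_pow_mem_of_index_ne_zero hHfi.index_ne_zero p
  refine ⟨H.comap φ, ?_, ?_⟩
  · constructor
    rw [Subgroup.index_comap]
    exact Subgroup.FiniteIndex.index_ne_zero (H := H.subgroupOf φ.range)
  letI cg : CommGroup ↥H :=
    { (inferInstance : Group ↥H) with
      mul_comm := fun a b => Subtype.ext (hHcomm a a.2 b b.2) }
  haveI : Group.FG ↥H := Subgroup.fg_of_index_ne_zero H
  have hfg : AddGroup.FG (Additive ↥H) := GroupFG.iff_add_fg.mp inferInstance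
  set m : Additive ↥H := Additive.ofMul (⟨p ^ n, hpn⟩ : ↥H) with hm_def
  have hm : ∀ k : ℤ, k • m = 0 → k = 0 := by
    intro k hk
    have h1 : (⟨p ^ n, hpn⟩ : ↥H) ^ k = 1 := by
      rwa [← ofMul_zpow, ofMul_eq_zero] at hk
    have h2 : p ^ ((n : ℤ) * k) = 1 := by
      have := congrArg (H.subtype) h1
      simpa [← zpow_natCast, ← zpow_mul] using this
    rw [zpow_eq_one_iff_modEq, hp] at h2
    have : (n : ℤ) * k = 0 := by simpa [Int.ModEq] using h2
    rcases mul_eq_zero.mp this with h | h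
    · exact absurd h (by exact_mod_cast hn0.ne')
    · exact h
  obtain ⟨c, hc⟩ := exists_addHom_to_real hfg m hm
  let χ : ↥H →* Multiplicative ℝ :=
    MonoidHom.mk' (fun a => Multiplicative.ofAdd (c (Additive.ofMul a)))
      (fun a b => by
        simp only [ofMul_mul, map_add, ofAdd_add])
  set ρ : ↥(H.comap φ) →* ↥H :=
    (φ.comp (H.comap φ).subtype).codRestrict H (fun x => x.2) with hρ
  refine ⟨χ.comp ρ, (g : G) ^ n, ⟨?_, ?_⟩, ?_⟩
  · show φ ((g : G) ^ n) ∈ H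
    rw [map_pow]; exact hpn
  · exact pow_mem g.2 n
  · have hρx : ρ ⟨(g : G) ^ n, by rw [Subgroup.mem_comap, map_pow]; exact hpn⟩
        = (⟨p ^ n, hpn⟩ : ↥H) := by
      apply Subtype.ext
      simp [hρ, hpdef]
      exact map_pow φ (g : G) n
    intro hcontra
    apply hc
    have : χ (⟨p ^ n, hpn⟩ : ↥H) = 1 := by
      rw [← hρx]; exact hcontra
    simpa [χ, hm_def, MonoidHom.mk'_apply] using this
end
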